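/- Let P be a symmetric positive definite n×n matrix, F, G₁, …, G_m real n×n matrices, h > 0, ᾱ_u > 0 with FᵀPF ≤ ᾱ_u P (as symmetric matrices), and c̄ ∈ (0,1). Suppose FᵀP + PF + Σ_{j=1}^m GⱼᵀPGⱼ ≤ −((c̄/h) + ᾱ_u h) P. Then (I + hF)ᵀP(I + hF) + h Σ_{j=1}^m GⱼᵀPGⱼ ≤ (1 − c̄) P. -/

import Mathlib

open Matrix

lemma psd_smul_aux {n : ℕ} {A : Matrix (Fin n) (Fin n) ℝ} (hA : A.PosSemidef)
    {r : ℝ} (hr : 0 ≤ r) : (r • A).PosSemidef := by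
  refine posSemidef_iff_dotProduct_mulVec.mpr ⟨?_, fun x => ?_⟩
  · unfold Matrix.IsHermitian at *
    rw [conjTranspose_smul, hA.1]
    simp
  · rw [smul_mulVec, dotProduct_smul, smul_eq_mul]
    exact mul_nonneg hr (hA.dotProduct_mulVec_nonneg x)

lemma psd_add_aux {n : ℕ} {A B : Matrix (Fin n) (Fin n) ℝ} (hA : A.PosSemidef)
    (hB : B.PosSemidef) : (A + B).PosSemidef := by
  refine posSemidef_iff_dotProduct_mulVec.mpr ⟨hA.1.add hB.1, fun x => ?_⟩
  rw [add_mulVec, dotProduct_add]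
  exact add_nonneg (hA.dotProduct_mulVec_nonneg x) (hB.dotProduct_mulVec_nonneg x)

/-- Continuous-time Lyapunov–Itô LMI implies the discrete-time Lyapunov LMI for
the Euler–Maruyama discretization: if `FᵀPF ≤ ᾱ_u P` and
`FᵀP + PF + Σ GⱼᵀPGⱼ ≤ −(c̄/h + ᾱ_u h)P`, then
`(I + hF)ᵀP(I + hF) + h Σ GⱼᵀPGⱼ ≤ (1 − c̄)P`. -/
theorem stmt15 (n m : ℕ) (P F : Matrix (Fin n) (Fin n) ℝ)
    (G : Fin m → Matrix (Fin n) (Fin n) ℝ)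
    (hP : P.PosDef) (h c au : ℝ) (hh : 0 < h) (hc : c ∈ Set.Ioo (0 : ℝ) 1)
    (hau : 0 < au)
    (hFu : (au • P - Fᵀ * P * F).PosSemidef)
    (hmain : ((-(c / h + au * h)) • P
        - (Fᵀ * P + P * F + ∑ j, (G j)ᵀ * P * G j)).PosSemidef) :
    ((1 - c) • P
        - ((1 + h • F)ᵀ * P * (1 + h • F) + h • ∑ j, (G j)ᵀ * P * G j)).PosSemidef := by
  have key : (1 - c) • P
        - ((1 + h • F)ᵀ * P * (1 + h • F) + h • ∑ j, (G j)ᵀ * P * G j)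
      = h • ((-(c / h + au * h)) • P
        - (Fᵀ * P + P * F + ∑ j, (G j)ᵀ * P * G j))
        + (h * h) • (au • P - Fᵀ * P * F) := by
    have hch : h * (c / h) = c := by field_simp
    simp only [transpose_add, transpose_one, transpose_smul, add_mul, mul_add,
      one_mul, mul_one, Matrix.smul_mul, Matrix.mul_smul, smul_smul,
      smul_sub, smul_add, sub_smul, one_smul, neg_smul, neg_add, mul_neg]
    rw [hch]
    module
  rw [key]
  exact psd_add_aux (psd_smul_aux hmain hh.le)
    (psd_smul_aux hFu (mul_nonneg hh.le hh.le))
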